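/- Let Γ and Λ₁, …, Λ_m be lattices in an LCA group G with Haar measure, and suppose Γ ⊇ ⨆_{i=1}^m (γ_i + Λ_i) is a disjoint union of cosets with each Λ_i ≤ Γ of finite index. Then 1/covol(Γ) ≥ ∑_{i=1}^m 1/covol(Λ_i). -/

import Mathlib

/-- If Γ contains a disjoint union of cosets γ_i + Λ_i of finite-index subgroups Λ_i ≤ Γ,
then 1/covol(Γ) ≥ ∑ 1/covol(Λ_i), where covol(Λ_i) = [Γ : Λ_i]·covol(Γ). -/
theorem stmt_14 {G : Type*} [AddCommGroup G] (m : ℕ)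
    (Γ : AddSubgroup G) (Λ : Fin m → AddSubgroup G)
    (hle : ∀ i, Λ i ≤ Γ)
    (hfin : ∀ i, (Λ i).relIndex Γ ≠ 0)
    (γ : Fin m → G)
    (hsub : ∀ i, ((γ i + ·) '' (Λ i : Set G)) ⊆ (Γ : Set G))
    (hdisj : ∀ i j, i ≠ j →
      Disjoint ((γ i + ·) '' (Λ i : Set G)) ((γ j + ·) '' (Λ j : Set G)))
    (covolΓ : ℝ) (hpos : 0 < covolΓ)
    (covolΛ : Fin m → ℝ)
    (hcovol : ∀ i, covolΛ i = ((Λ i).relIndex Γ : ℝ) * covolΓ) :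
    ∑ i, (covolΛ i)⁻¹ ≤ covolΓ⁻¹ := by
  classical
  set H : Fin m → AddSubgroup Γ := fun i => (Λ i).addSubgroupOf Γ with hH
  have hHind : ∀ i, (H i).index ≠ 0 := fun i => hfin i
  set K : AddSubgroup Γ := ⨅ i, H i with hK
  have hKind : K.index ≠ 0 := AddSubgroup.index_iInf_ne_zero hHind
  have hKle : ∀ i, K ≤ H i := fun i => iInf_le H i
  haveI : K.FiniteIndex := ⟨hKind⟩
  -- lift γ i to Γ
  have hγΓ : ∀ i, γ i ∈ Γ := fun i => hsub i ⟨0, (Λ i).zero_mem, by simp⟩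
  set γ' : ∀ i, Γ := fun i => ⟨γ i, hγΓ i⟩ with hγ'
  -- the injection
  set r : Fin m → ℕ := fun i => K.relIndex (H i) with hr
  have hrmul : ∀ i, r i * (H i).index = K.index := fun i =>
    AddSubgroup.relIndex_mul_index (hKle i)
  have hrne : ∀ i, r i ≠ 0 := by
    intro i h
    apply hKind
    rw [← hrmul i, h, zero_mul]
  -- finite index instances for quotients
  haveI : ∀ i, (K.addSubgroupOf (H i)).FiniteIndex := fun i => ⟨hrne i⟩
  let F : (Σ i, (H i : Type _) ⧸ K.addSubgroupOf (H i)) → Γ ⧸ K := fun p =>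
    Quotient.liftOn' p.2 (fun h => QuotientAddGroup.mk (γ' p.1 + (h : Γ)))
      (by
        intro a b hab
        rw [QuotientAddGroup.leftRel_apply] at hab
        apply QuotientAddGroup.eq.mpr
        have h2 : -((a : Γ)) + (b : Γ) ∈ K := hab
        convert h2 using 1
        abel)
  have hFinj : Function.Injective F := by
    rintro ⟨i, a⟩ ⟨j, b⟩ hab
    induction a using Quotient.inductionOn' with | h x =>
    induction b using Quotient.inductionOn' with | h y =>
    have hab' : (QuotientAddGroup.mk (γ' i + (x : Γ)) : Γ ⧸ K)
        = QuotientAddGroup.mk (γ' j + (y : Γ)) := hab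
    rw [QuotientAddGroup.eq] at hab'
    by_cases hij : i = j
    · subst hij
      simp only [Sigma.mk.inj_iff, heq_eq_eq, true_and]
      apply Quotient.sound'
      rw [QuotientAddGroup.leftRel_apply]
      show -((x : Γ)) + (y : Γ) ∈ K
      convert hab' using 1
      abel
    · exfalso
      -- the element γ j + y lies in both cosets
      set k : Γ := -(γ' i + (x : Γ)) + (γ' j + (y : Γ)) with hk
      have hkK : k ∈ K := hab'
      have hkHi : k ∈ H i := hKle i hkK
      have hxk : ((x : Γ) + k : Γ) ∈ H i := (H i).add_mem x.2 hkHi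
      have h1 : (γ j + (y : G)) ∈ ((γ i + ·) '' (Λ i : Set G)) := by
        refine ⟨((x : Γ) + k : Γ), hxk, ?_⟩
        have : γ' i + ((x : Γ) + k) = γ' j + (y : Γ) := by
          rw [hk]; abel
        have := congrArg (Subtype.val) this
        simpa using this
      have h2 : (γ j + (y : G)) ∈ ((γ j + ·) '' (Λ j : Set G)) :=
        ⟨(y : Γ), y.2, rfl⟩
      exact Set.disjoint_left.mp (hdisj i j hij) h1 h2
  -- cardinalities
  haveI : Finite (Γ ⧸ K) := AddSubgroup.finite_quotient_of_finiteIndex (H := K)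
  haveI : ∀ i, Finite ((H i : Type _) ⧸ K.addSubgroupOf (H i)) := fun i =>
    AddSubgroup.finite_quotient_of_finiteIndex (H := K.addSubgroupOf (H i))
  have hcard : ∑ i, r i ≤ K.index := by
    have h1 : Nat.card (Σ i, (H i : Type _) ⧸ K.addSubgroupOf (H i))
        ≤ Nat.card (Γ ⧸ K) := Nat.card_le_card_of_injective F hFinj
    rw [AddSubgroup.index_eq_card]
    calc ∑ i, r i
        = ∑ i, Nat.card ((H i : Type _) ⧸ K.addSubgroupOf (H i)) :=
          Finset.sum_congr rfl fun i _ => AddSubgroup.index_eq_card _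
      _ = Nat.card (Σ i, (H i : Type _) ⧸ K.addSubgroupOf (H i)) := by
          haveI := fun i => Fintype.ofFinite ((H i : Type _) ⧸ K.addSubgroupOf (H i))
          simp [Nat.card_eq_fintype_card, Fintype.card_sigma]
      _ ≤ _ := h1
  -- real arithmetic
  have key : ∑ i, ((Λ i).relIndex Γ : ℝ)⁻¹ ≤ 1 := by
    have hn : (0 : ℝ) < (K.index : ℝ) := by positivity
    have heach : ∀ i, ((Λ i).relIndex Γ : ℝ)⁻¹ = (r i : ℝ) / (K.index : ℝ) := by
      intro i
      have h : (r i : ℝ) * ((Λ i).relIndex Γ : ℝ) = (K.index : ℝ) := by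
        exact_mod_cast hrmul i
      have hk : ((Λ i).relIndex Γ : ℝ) ≠ 0 := Nat.cast_ne_zero.2 (hfin i)
      field_simp
      linarith [h]
    calc ∑ i, ((Λ i).relIndex Γ : ℝ)⁻¹ = ∑ i, (r i : ℝ) / (K.index : ℝ) := by
          simp [heach]
      _ = (∑ i, (r i : ℝ)) / (K.index : ℝ) := by rw [Finset.sum_div]
      _ ≤ (K.index : ℝ) / (K.index : ℝ) := by
          gcongr
          exact_mod_cast hcard
      _ = 1 := div_self hn.ne'
  calc ∑ i, (covolΛ i)⁻¹
      = ∑ i, ((Λ i).relIndex Γ : ℝ)⁻¹ * covolΓ⁻¹ := by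
        simp [hcovol, mul_inv, mul_comm]
    _ = (∑ i, ((Λ i).relIndex Γ : ℝ)⁻¹) * covolΓ⁻¹ := by rw [Finset.sum_mul]
    _ ≤ 1 * covolΓ⁻¹ := by
        apply mul_le_mul_of_nonneg_right key (by positivity)
    _ = covolΓ⁻¹ := one_mul _
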